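/- Let U = U(λ) be the first Weyl algebra module with basis {e_n : n ∈ ℤ}, x·e_n = e_{n+1}, ∂·e_n = (λ+n)e_{n-1}, for λ ∈ ℂ \ ℤ. Then for λ, μ ∈ ℂ \ ℤ, U(λ) ≅ U(μ) as A_1-modules if and only if λ - μ ∈ ℤ. -/

import Mathlib

/-- The operator `x`: `x · e_n = e_{n+1}` on `U(λ)`, basis `e_n ↔ x^{λ+n}`. -/
noncomputable def weylX : (ℤ →₀ ℂ) →ₗ[ℂ] (ℤ →₀ ℂ) :=
  Finsupp.lmapDomain ℂ ℂ (fun n => n + 1)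

/-- The operator `∂`: `∂ · e_n = (λ + n) e_{n-1}`. -/
noncomputable def weylD (l : ℂ) : (ℤ →₀ ℂ) →ₗ[ℂ] (ℤ →₀ ℂ) :=
  Finsupp.lsum ℂ (fun n => (l + (n : ℂ)) • Finsupp.lsingle (n - 1))

lemma weylX_single (n : ℤ) (a : ℂ) :
    weylX (Finsupp.single n a) = Finsupp.single (n + 1) a := by
  simp only [weylX, Finsupp.lmapDomain_apply]
  rw [Finsupp.mapDomain_single]

lemma weylD_single (c : ℂ) (n : ℤ) (a : ℂ) :
    weylD c (Finsupp.single n a) = (c + (n : ℂ)) • Finsupp.single (n - 1) a := by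
  simp only [weylD, Finsupp.lsum_single, LinearMap.smul_apply, Finsupp.lsingle_apply,
    Finsupp.smul_single]

lemma weylD_apply (c : ℂ) (u : ℤ →₀ ℂ) (k : ℤ) :
    weylD c u k = (c + ((k + 1 : ℤ) : ℂ)) * u (k + 1) := by
  classical
  rw [weylD, Finsupp.lsum_apply, Finsupp.sum_apply, Finsupp.sum]
  rw [Finset.sum_eq_single (k + 1)]
  · simp only [LinearMap.smul_apply, Finsupp.lsingle_apply, Finsupp.smul_apply, smul_eq_mul]
    rw [show k + 1 - 1 = k from by omega, Finsupp.single_eq_same]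
  · intro n _ hn
    have h : n - 1 ≠ k := by omega
    simp only [LinearMap.smul_apply, Finsupp.lsingle_apply, Finsupp.smul_apply, smul_eq_mul]
    rw [Finsupp.single_eq_of_ne' h, mul_zero]
  · intro h
    rw [Finsupp.notMem_support_iff.mp h]
    simp only [map_zero, Finsupp.coe_zero, Pi.zero_apply]

lemma weylX_apply (u : ℤ →₀ ℂ) (k : ℤ) :
    weylX u (k + 1) = u k := by
  have hinj : Function.Injective (fun n : ℤ => n + 1) := fun a b h => by
    simpa using h
  simpa [weylX] using Finsupp.mapDomain_apply hinj u k

/-- For `λ, μ ∈ ℂ \ ℤ`, the modules `U(λ)` and `U(μ)` over the first Weyl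
algebra are isomorphic (i.e. there is a linear bijection commuting with the
actions of `x` and `∂`) if and only if `λ - μ ∈ ℤ`. -/
theorem weyl_U_iso_iff (l m : ℂ)
    (hl : ∀ n : ℤ, l ≠ (n : ℂ)) (hm : ∀ n : ℤ, m ≠ (n : ℂ)) :
    (∃ T : (ℤ →₀ ℂ) ≃ₗ[ℂ] (ℤ →₀ ℂ),
        (∀ v, T (weylX v) = weylX (T v)) ∧
        (∀ v, T (weylD l v) = weylD m (T v)))
      ↔ ∃ n : ℤ, l - m = (n : ℂ) := by
  constructor
  · rintro ⟨T, hX, hD⟩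
    set w : ℤ →₀ ℂ := T (Finsupp.single 0 1) with hw
    have hw0 : w ≠ 0 := by
      intro h
      have : (Finsupp.single (0:ℤ) (1:ℂ)) = 0 := by
        apply T.injective
        simpa [hw] using h
      simpa using Finsupp.single_eq_zero.mp this
    have h1 : weylD l (weylX (Finsupp.single 0 1)) = (l + 1) • Finsupp.single (0:ℤ) (1:ℂ) := by
      rw [weylX_single, weylD_single]
      norm_num
    have h2 : T (weylD l (weylX (Finsupp.single 0 1))) = weylD m (weylX w) := by
      rw [hD, hX]
    rw [h1, map_smul] at h2
    obtain ⟨k, hk⟩ : ∃ k, w k ≠ 0 := by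
      by_contra h
      push_neg at h
      exact hw0 (Finsupp.ext h)
    have h3 : (l + 1) * w k = (m + ((k + 1 : ℤ) : ℂ)) * w k := by
      have := congrArg (fun u : ℤ →₀ ℂ => u k) h2
      simp only [Finsupp.smul_apply, smul_eq_mul] at this
      rw [weylD_apply, weylX_apply] at this
      exact this
    have h4 : l + 1 = m + ((k + 1 : ℤ) : ℂ) := mul_right_cancel₀ hk h3
    refine ⟨k, ?_⟩
    push_cast at h4 ⊢
    linear_combination h4
  · rintro ⟨n, hn⟩
    refine ⟨Finsupp.domLCongr (Equiv.addRight n), ?_, ?_⟩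
    · intro v
      induction v using Finsupp.induction_linear with
      | zero => simp
      | add f g hf hg => simp only [map_add, hf, hg]
      | single a b =>
        rw [weylX_single, Finsupp.domLCongr_single, Finsupp.domLCongr_single, weylX_single]
        simp only [Equiv.coe_addRight]
        congr 1
        omega
    · intro v
      induction v using Finsupp.induction_linear with
      | zero => simp
      | add f g hf hg => simp only [map_add, hf, hg]
      | single a b =>
        rw [weylD_single, map_smul, Finsupp.domLCongr_single, Finsupp.domLCongr_single,
          weylD_single]
        simp only [Equiv.coe_addRight]
        have h : l + (a : ℂ) = m + ((a + n : ℤ) : ℂ) := by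
          push_cast
          have hl' : l = m + n := by linear_combination hn
          rw [hl']; ring
        rw [h]
        congr 2
        omega
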